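/- Let Y : [0,T] → [0,∞) be continuous, a ≥ 0, C₃, C₅ > 0, and h : [0,T] → [0,∞) non-decreasing with Y(t) ≤ e^{C₅t} h(t) + C₃ e^{C₅t} ∫₀ᵗ Y(s)² ds for all t. If C₃ ∫₀ᵀ e^{2C₅s} h(s) ds < 1, then for all t ∈ [0,T]: Y(t) ≤ e^{C₅t} h(t) · ( 1 - C₃ ∫₀ᵗ e^{2C₅s} h(s) ds )⁻¹. -/

import Mathlib

open MeasureTheory intervalIntegral Set

set_option maxHeartbeats 1600000 in
lemma ftc_aux (lam σ : ℝ) (g : ℝ → ℝ) (hσ : 0 ≤ σ) (hlam : 0 < lam)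
    (hg : Continuous g)
    (hden : ∀ s ∈ Icc (0:ℝ) σ, 0 < 1 - lam * ∫ u in (0:ℝ)..s, g u) :
    ∫ s in (0:ℝ)..σ, g s * ((1 - lam * ∫ u in (0:ℝ)..s, g u)⁻¹) ^ 2
      = lam⁻¹ * ((1 - lam * ∫ u in (0:ℝ)..σ, g u)⁻¹ - 1) := by
  set G : ℝ → ℝ := fun s => ∫ u in (0:ℝ)..s, g u with hGdef
  have hG_cont : Continuous G :=
    intervalIntegral.continuous_primitive (fun u v => hg.intervalIntegrable u v) 0
  have hG0 : G 0 = 0 := integral_same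
  have hGderiv : ∀ s : ℝ, HasDerivAt G (g s) s := fun s =>
    intervalIntegral.integral_hasDerivAt_right (hg.intervalIntegrable 0 s)
      (hg.stronglyMeasurable.stronglyMeasurableAtFilter) hg.continuousAt
  have huIcc : uIcc (0:ℝ) σ = Icc 0 σ := uIcc_of_le hσ
  have hFderiv : ∀ s ∈ uIcc (0:ℝ) σ,
      HasDerivAt (fun u => lam⁻¹ * (1 - lam * G u)⁻¹)
        (g s * ((1 - lam * G s)⁻¹) ^ 2) s := by
    intro s hs
    rw [huIcc] at hs
    have hdne : 1 - lam * G s ≠ 0 := (hden s hs).ne'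
    have h1 : HasDerivAt (fun u => 1 - lam * G u) (-(lam * g s)) s := by
      simpa using ((hGderiv s).const_mul lam).const_sub 1
    have h2 := (h1.inv hdne).const_mul lam⁻¹
    refine h2.congr_deriv ?_
    field_simp
  have hcontint : ContinuousOn (fun s => g s * ((1 - lam * G s)⁻¹) ^ 2)
      (uIcc (0:ℝ) σ) := by
    rw [huIcc]
    apply hg.continuousOn.mul
    apply ContinuousOn.pow
    apply ContinuousOn.inv₀
    · exact (continuous_const.sub (continuous_const.mul hG_cont)).continuousOn
    · intro s hs; exact (hden s hs).ne'
  have := integral_eq_sub_of_hasDerivAt hFderiv (hcontint.intervalIntegrable)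
  rw [this, hG0]
  ring
set_option maxHeartbeats 1000000 in
lemma gron_aux
    (T lam : ℝ) (hT : 0 < T) (hlam1 : 1 < lam) (hlam2 : lam ≤ 2)
    (a b x : ℝ → ℝ)
    (ha : Continuous a) (hb : Continuous b) (hx : Continuous x)
    (hapos : ∀ s, 0 < a s) (hbnn : ∀ s, 0 ≤ b s) (hxnn : ∀ s, 0 ≤ x s)
    (hamono : MonotoneOn a (Icc 0 T))
    (hineq : ∀ t ∈ Icc (0:ℝ) T, x t ≤ a t + ∫ s in (0:ℝ)..t, b s * x s ^ 2)
    (hsmall : lam * ∫ s in (0:ℝ)..T, a s * b s < 1) :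
    ∀ t ∈ Icc (0:ℝ) T,
      x t ≤ a t * (1 - lam * ∫ s in (0:ℝ)..t, a s * b s)⁻¹ := by
  have hlam0 : (0:ℝ) < lam := lt_trans one_pos hlam1
  set R : ℝ → ℝ := fun t => ∫ s in (0:ℝ)..t, a s * b s with hRdef
  set z : ℝ → ℝ := fun t => ∫ s in (0:ℝ)..t, b s * x s ^ 2 with hzdef
  have hab_cont : Continuous (fun s => a s * b s) := ha.mul hb
  have hbx_cont : Continuous (fun s => b s * x s ^ 2) := hb.mul (hx.pow 2)
  have habnn : ∀ s, 0 ≤ a s * b s := fun s => mul_nonneg (hapos s).le (hbnn s)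
  have hbxnn : ∀ s, 0 ≤ b s * x s ^ 2 := fun s => mul_nonneg (hbnn s) (sq_nonneg _)
  have hR_cont : Continuous R :=
    intervalIntegral.continuous_primitive (fun u v => hab_cont.intervalIntegrable u v) 0
  have hz_cont : Continuous z :=
    intervalIntegral.continuous_primitive (fun u v => hbx_cont.intervalIntegrable u v) 0
  have hR0 : R 0 = 0 := integral_same
  have hz0 : z 0 = 0 := integral_same
  have hRmono : ∀ ⦃s t : ℝ⦄, s ≤ t → R s ≤ R t := by
    intro s t hst
    have hadd : R s + ∫ u in s..t, a u * b u = R t :=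
      integral_add_adjacent_intervals (hab_cont.intervalIntegrable 0 s)
        (hab_cont.intervalIntegrable s t)
    have : 0 ≤ ∫ u in s..t, a u * b u :=
      integral_nonneg hst (fun u _ => habnn u)
    linarith
  have hRnn : ∀ t, 0 ≤ t → 0 ≤ R t := by
    intro t ht
    have := hRmono ht
    rw [hR0] at this; exact this
  have hznn : ∀ t, 0 ≤ t → 0 ≤ z t :=
    fun t ht => integral_nonneg ht (fun u _ => hbxnn u)
  have hzmono : ∀ ⦃s t : ℝ⦄, s ≤ t → z s ≤ z t := by
    intro s t hst
    have hadd : z s + ∫ u in s..t, b u * x u ^ 2 = z t :=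
      integral_add_adjacent_intervals (hbx_cont.intervalIntegrable 0 s)
        (hbx_cont.intervalIntegrable s t)
    have : 0 ≤ ∫ u in s..t, b u * x u ^ 2 :=
      integral_nonneg hst (fun u _ => hbxnn u)
    linarith
  have hden : ∀ t ∈ Icc (0:ℝ) T, 0 < 1 - lam * R t := by
    rintro t ⟨ht0, htT⟩
    have h1 : R t ≤ R T := hRmono htT
    nlinarith [hRnn t ht0]
  have hRderiv : ∀ s : ℝ, HasDerivAt R (a s * b s) s := by
    intro s
    exact intervalIntegral.integral_hasDerivAt_right
      (hab_cont.intervalIntegrable 0 s)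
      (hab_cont.stronglyMeasurable.stronglyMeasurableAtFilter)
      hab_cont.continuousAt
  -- FTC computation
  have key : ∀ σ ∈ Icc (0:ℝ) T,
      ∫ s in (0:ℝ)..σ, a s * b s * ((1 - lam * R s)⁻¹) ^ 2
        = lam⁻¹ * ((1 - lam * R σ)⁻¹ - 1) := by
    rintro σ ⟨hσ0, hσT⟩
    have huIcc : uIcc (0:ℝ) σ = Icc 0 σ := uIcc_of_le hσ0
    have hsub : Icc (0:ℝ) σ ⊆ Icc 0 T := Icc_subset_Icc le_rfl hσT
    have hFderiv : ∀ s ∈ uIcc (0:ℝ) σ,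
        HasDerivAt (fun u => lam⁻¹ * (1 - lam * R u)⁻¹)
          (a s * b s * ((1 - lam * R s)⁻¹) ^ 2) s := by
      intro s hs
      rw [huIcc] at hs
      have hdne : 1 - lam * R s ≠ 0 := (hden s (hsub hs)).ne'
      have h1 : HasDerivAt (fun u => 1 - lam * R u) (-(lam * (a s * b s))) s := by
        simpa using ((hRderiv s).const_mul lam).const_sub 1
      have h2 := (h1.inv hdne).const_mul lam⁻¹
      refine h2.congr_deriv ?_
      field_simp
    have hcontint : ContinuousOn (fun s => a s * b s * ((1 - lam * R s)⁻¹) ^ 2)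
        (uIcc (0:ℝ) σ) := by
      rw [huIcc]
      apply hab_cont.continuousOn.mul
      apply ContinuousOn.pow
      apply ContinuousOn.inv₀
      · exact (continuous_const.sub (continuous_const.mul hR_cont)).continuousOn
      · intro s hs; exact (hden s (hsub hs)).ne'
    have := integral_eq_sub_of_hasDerivAt hFderiv (hcontint.intervalIntegrable)
    rw [this, hR0]
    ring
  -- propagation
  have prop : ∀ σ ∈ Icc (0:ℝ) T,
      (∀ u ∈ Icc (0:ℝ) σ, x u ≤ a u * (1 - lam * R u)⁻¹) →
      z σ ≤ lam⁻¹ * (a σ * ((1 - lam * R σ)⁻¹ - 1)) := by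
    rintro σ ⟨hσ0, hσT⟩ IH
    have hsub : Icc (0:ℝ) σ ⊆ Icc 0 T := Icc_subset_Icc le_rfl hσT
    have hcont2 : ContinuousOn (fun s => a s * b s * ((1 - lam * R s)⁻¹) ^ 2)
        (Icc (0:ℝ) σ) := by
      apply hab_cont.continuousOn.mul
      apply ContinuousOn.pow
      apply ContinuousOn.inv₀
      · exact (continuous_const.sub (continuous_const.mul hR_cont)).continuousOn
      · intro s hs; exact (hden s (hsub hs)).ne'
    have hint2 : IntervalIntegrable (fun s => a s * b s * ((1 - lam * R s)⁻¹) ^ 2)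
        volume 0 σ := by
      apply ContinuousOn.intervalIntegrable
      rwa [uIcc_of_le hσ0]
    have hint3 : IntervalIntegrable (fun s => a σ * (a s * b s * ((1 - lam * R s)⁻¹) ^ 2))
        volume 0 σ := hint2.const_mul _
    have step1 : z σ ≤ ∫ s in (0:ℝ)..σ, a σ * (a s * b s * ((1 - lam * R s)⁻¹) ^ 2) := by
      apply integral_mono_on hσ0 (hbx_cont.intervalIntegrable 0 σ) hint3
      intro u hu
      have hu' := hsub hu
      have hx_le : x u ≤ a u * (1 - lam * R u)⁻¹ := IH u hu
      have h1 : x u ^ 2 ≤ (a u * (1 - lam * R u)⁻¹) ^ 2 :=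
        pow_le_pow_left₀ (hxnn u) hx_le 2
      have h2 : b u * x u ^ 2 ≤ b u * (a u * (1 - lam * R u)⁻¹) ^ 2 :=
        mul_le_mul_of_nonneg_left h1 (hbnn u)
      refine h2.trans ?_
      have hau : a u ≤ a σ := hamono hu' ⟨hσ0, hσT⟩ hu.2
      have hnn : 0 ≤ a u * b u * ((1 - lam * R u)⁻¹) ^ 2 :=
        mul_nonneg (habnn u) (sq_nonneg _)
      calc b u * (a u * (1 - lam * R u)⁻¹) ^ 2
          = a u * (a u * b u * ((1 - lam * R u)⁻¹) ^ 2) := by ring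
        _ ≤ a σ * (a u * b u * ((1 - lam * R u)⁻¹) ^ 2) :=
            mul_le_mul_of_nonneg_right hau hnn
    calc z σ ≤ ∫ s in (0:ℝ)..σ, a σ * (a s * b s * ((1 - lam * R s)⁻¹) ^ 2) := step1
      _ = a σ * ∫ s in (0:ℝ)..σ, a s * b s * ((1 - lam * R s)⁻¹) ^ 2 := by
          exact integral_const_mul _ _
      _ = a σ * (lam⁻¹ * ((1 - lam * R σ)⁻¹ - 1)) := by rw [key σ ⟨hσ0, hσT⟩]
      _ = lam⁻¹ * (a σ * ((1 - lam * R σ)⁻¹ - 1)) := by ring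
  -- main claim
  have hclaim : ∀ t ∈ Icc (0:ℝ) T, z t ≤ a t * ((1 - lam * R t)⁻¹ - 1) := by
    by_contra hcon
    push_neg at hcon
    obtain ⟨t₁, ht₁, ht₁'⟩ := hcon
    set N : Set ℝ := {s | s ∈ Icc (0:ℝ) T ∧ a s * ((1 - lam * R s)⁻¹ - 1) < z s} with hNdef
    have hNne : N.Nonempty := ⟨t₁, ht₁, ht₁'⟩
    have hNbdd : BddBelow N := ⟨0, fun s hs => hs.1.1⟩
    set t₀ := sInf N with ht₀def
    have ht₀mem : t₀ ∈ Icc (0:ℝ) T := by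
      constructor
      · exact le_csInf hNne (fun s hs => hs.1.1)
      · exact (csInf_le hNbdd hNne.some_mem).trans hNne.some_mem.1.2
    have hbelow : ∀ s ∈ Icc (0:ℝ) T, s < t₀ → z s ≤ a s * ((1 - lam * R s)⁻¹ - 1) := by
      intro s hs hst
      by_contra hzs
      push_neg at hzs
      exact absurd (csInf_le hNbdd ⟨hs, hzs⟩) (not_le.mpr hst)
    -- continuity of the defect
    have hphi_cont : ContinuousOn (fun s => a s * ((1 - lam * R s)⁻¹ - 1)) (Icc (0:ℝ) T) := by
      apply ha.continuousOn.mul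
      apply ContinuousOn.sub _ continuousOn_const
      apply ContinuousOn.inv₀
      · exact (continuous_const.sub (continuous_const.mul hR_cont)).continuousOn
      · intro s hs; exact (hden s hs).ne'
    have hend : z t₀ ≤ a t₀ * ((1 - lam * R t₀)⁻¹ - 1) := by
      rcases eq_or_lt_of_le ht₀mem.1 with h0 | h0
      · rw [← h0, hz0, hR0]
        simp
      · -- limit from the left
        have hclos : t₀ ∈ closure (Ico (0:ℝ) t₀) := by
          rw [closure_Ico h0.ne]
          exact ⟨ht₀mem.1, le_rfl⟩
        have hsubset : Ico (0:ℝ) t₀ ⊆ Icc (0:ℝ) T :=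
          fun s hs => ⟨hs.1, (le_of_lt hs.2).trans ht₀mem.2⟩
        have hne : (nhdsWithin t₀ (Ico (0:ℝ) t₀)).NeBot :=
          mem_closure_iff_nhdsWithin_neBot.mp hclos
        have htend : Filter.Tendsto (fun s => z s - a s * ((1 - lam * R s)⁻¹ - 1))
            (nhdsWithin t₀ (Ico (0:ℝ) t₀))
            (nhds (z t₀ - a t₀ * ((1 - lam * R t₀)⁻¹ - 1))) := by
          have := (hz_cont.continuousOn.sub hphi_cont) t₀ ht₀mem
          exact this.tendsto.mono_left (nhdsWithin_mono _ hsubset)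
        have hev : ∀ s ∈ Ico (0:ℝ) t₀, z s - a s * ((1 - lam * R s)⁻¹ - 1) ≤ 0 := by
          intro s hs
          have := hbelow s (hsubset hs) hs.2
          linarith
        have := le_of_tendsto htend
          (Filter.eventually_of_mem self_mem_nhdsWithin hev)
        linarith
    have hfull : ∀ u ∈ Icc (0:ℝ) t₀, z u ≤ a u * ((1 - lam * R u)⁻¹ - 1) := by
      rintro u ⟨hu0, hu1⟩
      rcases eq_or_lt_of_le hu1 with h | h
      · rw [h]; exact hend
      · exact hbelow u ⟨hu0, hu1.trans ht₀mem.2⟩ h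
    have hIH : ∀ u ∈ Icc (0:ℝ) t₀, x u ≤ a u * (1 - lam * R u)⁻¹ := by
      rintro u hu
      have hu' : u ∈ Icc (0:ℝ) T := ⟨hu.1, hu.2.trans ht₀mem.2⟩
      have h1 := hineq u hu'
      have h2 := hfull u hu
      calc x u ≤ a u + z u := h1
        _ ≤ a u + a u * ((1 - lam * R u)⁻¹ - 1) := by linarith
        _ = a u * (1 - lam * R u)⁻¹ := by ring
    have hzt₀ : z t₀ ≤ lam⁻¹ * (a t₀ * ((1 - lam * R t₀)⁻¹ - 1)) := prop t₀ ht₀mem hIH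
    -- get a δ beyond t₀ where the claim still holds
    have hdelta : ∃ δ > 0, ∀ s ∈ Icc (0:ℝ) T, t₀ ≤ s → s ≤ t₀ + δ →
        z s ≤ a s * ((1 - lam * R s)⁻¹ - 1) := by
      rcases le_or_gt (R t₀) 0 with hc | hc
      · -- R t₀ = 0
        have hRt₀ : R t₀ = 0 := le_antisymm hc (hRnn t₀ ht₀mem.1)
        have hzt₀0 : z t₀ = 0 := by
          have h1 : z t₀ ≤ 0 := by
            rw [hRt₀] at hzt₀
            simpa using hzt₀
          exact le_antisymm h1 (hznn t₀ ht₀mem.1)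
        obtain ⟨u₀, hu₀mem, hu₀min⟩ :=
          isCompact_Icc.exists_isMinOn (nonempty_Icc.mpr hT.le) ha.continuousOn
        have hm0 : 0 < a u₀ := hapos u₀
        set η := a u₀ * (lam - 1) / 3 with hηdef
        have hη0 : 0 < η := by
          have : 0 < lam - 1 := by linarith
          positivity
        obtain ⟨δ₁, hδ₁0, hδ₁⟩ := Metric.continuousAt_iff.mp hz_cont.continuousAt η hη0
        refine ⟨δ₁ / 2, by positivity, ?_⟩
        intro s hs hts hsδ
        have hzsmall : ∀ u, t₀ ≤ u → u ≤ s → z u ≤ η := by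
          intro u hu1 hu2
          have h1 : z u ≤ z s := hzmono hu2
          have h2 : dist s t₀ < δ₁ := by
            rw [Real.dist_eq, abs_of_nonneg (by linarith)]
            linarith
          have := hδ₁ h2
          rw [Real.dist_eq, hzt₀0, sub_zero] at this
          have h3 : z s ≤ |z s| := le_abs_self _
          linarith
        have hintR : ∫ u in t₀..s, a u * b u = R s - R t₀ := by
          have h5 : R t₀ + ∫ u in t₀..s, a u * b u = R s :=
            integral_add_adjacent_intervals (hab_cont.intervalIntegrable 0 t₀)
              (hab_cont.intervalIntegrable t₀ s)
          linarith
        have hzadd : z s = z t₀ + ∫ u in t₀..s, b u * x u ^ 2 := by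
          have h5 : z t₀ + ∫ u in t₀..s, b u * x u ^ 2 = z s :=
            integral_add_adjacent_intervals (hbx_cont.intervalIntegrable 0 t₀)
              (hbx_cont.intervalIntegrable t₀ s)
          linarith
        have hstep : ∫ u in t₀..s, b u * x u ^ 2
            ≤ ∫ u in t₀..s, lam * (a s * (a u * b u)) := by
          apply integral_mono_on hts (hbx_cont.intervalIntegrable t₀ s)
            ((continuous_const.mul (continuous_const.mul hab_cont)).intervalIntegrable t₀ s)
          intro u hu
          have hu' : u ∈ Icc (0:ℝ) T := ⟨ht₀mem.1.trans hu.1, hu.2.trans hs.2⟩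
          have hxu : x u ≤ a u + η := by
            have h1 := hineq u hu'
            have h2 := hzsmall u hu.1 hu.2
            linarith
          have hsq : x u ^ 2 ≤ (a u + η) ^ 2 := by
            apply pow_le_pow_left₀ (hxnn u) hxu
          have hmu : a u₀ ≤ a u := hu₀min hu'
          have hquad : (a u + η) ^ 2 ≤ lam * a u ^ 2 := by
            have hη2 : η ≤ a u * ((lam - 1) / 3) := by
              rw [hηdef]
              have : (0:ℝ) ≤ (lam - 1) / 3 := by linarith
              calc a u₀ * (lam - 1) / 3 = a u₀ * ((lam - 1) / 3) := by ring
                _ ≤ a u * ((lam - 1) / 3) := mul_le_mul_of_nonneg_right hmu this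
            have h1 : (a u + η) ^ 2 ≤ (a u + a u * ((lam - 1) / 3)) ^ 2 := by
              apply pow_le_pow_left₀ (by linarith [hapos u, hη0]) (by linarith)
            have h2 : (1 + (lam - 1) / 3) ^ 2 ≤ lam := by nlinarith
            calc (a u + η) ^ 2 ≤ (a u + a u * ((lam - 1) / 3)) ^ 2 := h1
              _ = a u ^ 2 * (1 + (lam - 1) / 3) ^ 2 := by ring
              _ ≤ a u ^ 2 * lam := mul_le_mul_of_nonneg_left h2 (sq_nonneg _)
              _ = lam * a u ^ 2 := by ring
          have hau : a u ≤ a s := hamono hu' hs hu.2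
          calc b u * x u ^ 2 ≤ b u * (lam * a u ^ 2) := by
                have := hsq.trans hquad
                exact mul_le_mul_of_nonneg_left this (hbnn u)
            _ = lam * (a u * (a u * b u)) := by ring
            _ ≤ lam * (a s * (a u * b u)) := by
                have h6 : a u * (a u * b u) ≤ a s * (a u * b u) :=
                  mul_le_mul_of_nonneg_right hau (habnn u)
                exact mul_le_mul_of_nonneg_left h6 hlam0.le
        have hcalc : ∫ u in t₀..s, lam * (a s * (a u * b u)) = lam * (a s * (R s - R t₀)) := by
          rw [intervalIntegral.integral_const_mul, intervalIntegral.integral_const_mul, hintR]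
        have hzs : z s ≤ lam * a s * R s := by
          rw [hzadd, hzt₀0]
          rw [hRt₀] at hcalc
          calc (0:ℝ) + ∫ u in t₀..s, b u * x u ^ 2 ≤ lam * (a s * (R s - 0)) := by
                rw [zero_add]; exact hstep.trans (le_of_eq hcalc)
            _ = lam * a s * R s := by ring
        refine hzs.trans ?_
        have hd := hden s hs
        have hinv : (1 - lam * R s) * (1 - lam * R s)⁻¹ = 1 := mul_inv_cancel₀ hd.ne'
        have hfrac : lam * R s ≤ (1 - lam * R s)⁻¹ - 1 := by
          nlinarith [sq_nonneg (lam * R s), hRnn s hs.1, (hapos s).le]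
        calc lam * a s * R s = a s * (lam * R s) := by ring
          _ ≤ a s * ((1 - lam * R s)⁻¹ - 1) :=
              mul_le_mul_of_nonneg_left hfrac (hapos s).le
      · -- R t₀ > 0 : strict gap and continuity
        have hd := hden t₀ ht₀mem
        have hd1 : 1 - lam * R t₀ < 1 := by nlinarith
        have hphi0 : 0 < (1 - lam * R t₀)⁻¹ - 1 := by
          nlinarith [mul_inv_cancel₀ hd.ne', inv_pos.mpr hd]
        have hgap : z t₀ - a t₀ * ((1 - lam * R t₀)⁻¹ - 1) < 0 := by
          have hpos : 0 < a t₀ * ((1 - lam * R t₀)⁻¹ - 1) := mul_pos (hapos t₀) hphi0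
          have h4 : 0 < 1 - lam⁻¹ := by
            nlinarith [inv_pos.mpr hlam0, mul_inv_cancel₀ (ne_of_gt hlam0)]
          nlinarith [mul_pos h4 hpos, hzt₀]
        have hcontg : ContinuousWithinAt
            (fun s => z s - a s * ((1 - lam * R s)⁻¹ - 1)) (Icc (0:ℝ) T) t₀ :=
          (hz_cont.continuousOn.sub hphi_cont) t₀ ht₀mem
        have hev : ∀ᶠ s in nhdsWithin t₀ (Icc (0:ℝ) T),
            z s - a s * ((1 - lam * R s)⁻¹ - 1) < 0 :=
          hcontg.tendsto.eventually_lt_const hgap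
        rw [Filter.eventually_iff] at hev
        obtain ⟨ε, hε0, hball⟩ := Metric.mem_nhdsWithin_iff.mp hev
        refine ⟨ε / 2, by positivity, ?_⟩
        intro s hs hts hsδ
        have hmem : s ∈ Metric.ball t₀ ε := by
          rw [Metric.mem_ball, Real.dist_eq, abs_of_nonneg (by linarith)]
          linarith
        have := hball ⟨hmem, hs⟩
        simp only [mem_setOf_eq] at this
        linarith
    
    
    obtain ⟨δ, hδpos, hδ⟩ := hdelta
    obtain ⟨s, hsN, hslt⟩ := exists_lt_of_csInf_lt hNne (by linarith : t₀ < t₀ + δ)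
    have hs0 : t₀ ≤ s := csInf_le hNbdd hsN
    exact absurd (hδ s hsN.1 hs0 hslt.le) (not_le.mpr hsN.2)
  -- conclude
  intro t ht
  have h1 := hineq t ht
  have h2 := hclaim t ht
  calc x t ≤ a t + z t := h1
    _ ≤ a t + a t * ((1 - lam * R t)⁻¹ - 1) := by linarith
    _ = a t * (1 - lam * R t)⁻¹ := by ring


set_option maxHeartbeats 3200000 in
/-- Nonlinear (quadratic) Grönwall/Bihari-type inequality used in the PNP
convergence proof. -/
theorem quadratic_gronwall
    (T C₃ C₅ : ℝ) (hT : 0 < T) (hC₃ : 0 < C₃) (hC₅ : 0 < C₅)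
    (Y h : ℝ → ℝ)
    (hYcont : ContinuousOn Y (Icc 0 T))
    (hYnonneg : ∀ t ∈ Icc (0:ℝ) T, 0 ≤ Y t)
    (hhnonneg : ∀ t ∈ Icc (0:ℝ) T, 0 ≤ h t)
    (hhmono : ∀ s ∈ Icc (0:ℝ) T, ∀ t ∈ Icc (0:ℝ) T, s ≤ t → h s ≤ h t)
    (hineq : ∀ t ∈ Icc (0:ℝ) T,
      Y t ≤ Real.exp (C₅ * t) * h t
        + C₃ * Real.exp (C₅ * t) * ∫ s in (0:ℝ)..t, (Y s) ^ 2)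
    (hsmall : C₃ * (∫ s in (0:ℝ)..T, Real.exp (2 * C₅ * s) * h s) < 1) :
    ∀ t ∈ Icc (0:ℝ) T,
      Y t ≤ Real.exp (C₅ * t) * h t *
        (1 - C₃ * ∫ s in (0:ℝ)..t, Real.exp (2 * C₅ * s) * h s)⁻¹ := by
  have hT0 : (0:ℝ) ≤ T := hT.le
  -- the kernel b
  set b : ℝ → ℝ := fun s => C₃ * Real.exp (2 * C₅ * s) with hbdef
  have hb_cont : Continuous b := by
    exact continuous_const.mul (Real.continuous_exp.comp (continuous_const.mul continuous_id))
  have hb_pos : ∀ s, 0 < b s := fun s => mul_pos hC₃ (Real.exp_pos _)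
  have hb_mono : Monotone b := by
    intro u v huv
    have : Real.exp (2 * C₅ * u) ≤ Real.exp (2 * C₅ * v) := by
      apply Real.exp_le_exp.mpr; nlinarith
    exact mul_le_mul_of_nonneg_left this hC₃.le
  -- clamping
  set proj : ℝ → ℝ := fun s => max 0 (min s T) with hprojdef
  have hproj_mem : ∀ s, proj s ∈ Icc (0:ℝ) T :=
    fun s => ⟨le_max_left _ _, max_le hT0 (min_le_right _ _)⟩
  have hproj_cont : Continuous proj :=
    continuous_const.max (continuous_id.min continuous_const)
  have hproj_mono : Monotone proj :=
    fun u v huv => max_le_max le_rfl (min_le_min huv le_rfl)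
  have hproj_id : ∀ s ∈ Icc (0:ℝ) T, proj s = s := by
    rintro s ⟨h1, h2⟩
    simp only [hprojdef]
    rw [min_eq_left h2, max_eq_right h1]
  -- clamped h
  set hcl : ℝ → ℝ := fun s => h (proj s) with hcldef
  have hcl_mono : Monotone hcl :=
    fun u v huv => hhmono _ (hproj_mem u) _ (hproj_mem v) (hproj_mono huv)
  have hcl_nn : ∀ s, 0 ≤ hcl s := fun s => hhnonneg _ (hproj_mem s)
  have hcl_le : ∀ s, hcl s ≤ h T :=
    fun s => hhmono _ (hproj_mem s) T ⟨hT0, le_rfl⟩ (hproj_mem s).2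
  have hcl_eq : ∀ s ∈ Icc (0:ℝ) T, hcl s = h s := by
    intro s hs
    simp only [hcldef]
    rw [hproj_id s hs]
  have hcl_int : ∀ u v : ℝ, IntervalIntegrable hcl volume u v :=
    fun u v => hcl_mono.intervalIntegrable
  -- primitive of hcl * b
  set g0 : ℝ → ℝ := fun s => hcl s * b s with hg0def
  have hg0_int : ∀ u v : ℝ, IntervalIntegrable g0 volume u v :=
    fun u v => (hcl_mono.intervalIntegrable).mul_continuousOn hb_cont.continuousOn
  have hg0_nn : ∀ s, 0 ≤ g0 s := fun s => mul_nonneg (hcl_nn s) (hb_pos s).le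
  set Rb : ℝ → ℝ := fun τ => ∫ v in (0:ℝ)..τ, g0 v with hRbdef
  have hRb_cont : Continuous Rb := intervalIntegral.continuous_primitive hg0_int 0
  have hRb_mono : Monotone Rb := by
    intro u v huv
    have hadd : Rb u + ∫ w in u..v, g0 w = Rb v :=
      integral_add_adjacent_intervals (hg0_int 0 u) (hg0_int u v)
    have : 0 ≤ ∫ w in u..v, g0 w := integral_nonneg huv (fun w _ => hg0_nn w)
    linarith
  have hRb_nn : ∀ τ, 0 ≤ τ → 0 ≤ Rb τ :=
    fun τ hτ => integral_nonneg hτ (fun w _ => hg0_nn w)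
  -- identification of Rb with the statement's integral
  have hRb_eq : ∀ τ ∈ Icc (0:ℝ) T,
      Rb τ = C₃ * ∫ s in (0:ℝ)..τ, Real.exp (2 * C₅ * s) * h s := by
    rintro τ ⟨hτ0, hτT⟩
    rw [← intervalIntegral.integral_const_mul]
    apply integral_congr
    intro s hs
    rw [uIcc_of_le hτ0] at hs
    have hsT : s ∈ Icc (0:ℝ) T := ⟨hs.1, hs.2.trans hτT⟩
    simp only [hg0def, hbdef]
    rw [hcl_eq s hsT]
    ring
  have hρT1 : Rb T < 1 := by
    rw [hRb_eq T ⟨hT0, le_rfl⟩]; exact hsmall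
  -- primitive of hcl
  set H : ℝ → ℝ := fun u => ∫ v in (0:ℝ)..u, hcl v with hHdef
  have hH_cont : Continuous H := intervalIntegral.continuous_primitive hcl_int 0
  have hHadd : ∀ u v : ℝ, H u + ∫ w in u..v, hcl w = H v :=
    fun u v => integral_add_adjacent_intervals (hcl_int 0 u) (hcl_int u v)
  -- the goal
  intro t ht
  obtain ⟨ht0, htT⟩ := ht
  have hρt_le : Rb t ≤ Rb T := hRb_mono htT
  have hRbt1 : 0 < 1 - Rb t := by linarith
  set BB : ℝ := ∫ v in (0:ℝ)..T, b v with hBBdef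
  have hBBnn : 0 ≤ BB := integral_nonneg hT0 (fun u _ => (hb_pos u).le)
  -- sequences
  set e : ℕ → ℝ := fun n => 1 / (n + 1) with hedef
  have he_pos : ∀ n, 0 < e n := fun n => by positivity
  have he_le1 : ∀ n, e n ≤ 1 := by
    intro n
    rw [hedef]
    rw [div_le_one (by positivity)]
    simp
  have he_tend : Filter.Tendsto e Filter.atTop (nhds 0) :=
    tendsto_one_div_add_atTop_nhds_zero_nat
  have hlam_tend : Filter.Tendsto (fun n => 1 + e n) Filter.atTop (nhds 1) := by
    simpa using tendsto_const_nhds.add he_tend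
  have hshift_tend : ∀ τ : ℝ, Filter.Tendsto (fun n => Rb (τ + e n)) Filter.atTop (nhds (Rb τ)) := by
    intro τ
    have h1 : Filter.Tendsto (fun n => τ + e n) Filter.atTop (nhds τ) := by
      simpa using tendsto_const_nhds.add he_tend
    exact (hRb_cont.tendsto τ).comp h1
  have hQ_tend : ∀ τ : ℝ, Filter.Tendsto (fun n => (1 + e n) * (Rb (τ + e n) + e n * BB))
      Filter.atTop (nhds (Rb τ)) := by
    intro τ
    have := hlam_tend.mul ((hshift_tend τ).add (he_tend.mul (tendsto_const_nhds (x := BB))))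
    simpa using this
  have hevsmall : ∀ᶠ n in Filter.atTop, (1 + e n) * (Rb (T + e n) + e n * BB) < 1 :=
    (hQ_tend T).eventually_lt_const hρT1
  -- the main eventual bound
  have hbound : ∀ᶠ n in Filter.atTop, Y t ≤ Real.exp (C₅ * t) * (h t +
      ((h t + e n) * (1 + e n)⁻¹ * ((1 - (1 + e n) * (Rb (t + e n) + e n * BB))⁻¹ - 1)
        + e n * (C₃ * Real.exp (2 * C₅ * T) * (h T + e n) ^ 2
            * ((1 - (1 + e n) * (Rb (T + e n) + e n * BB))⁻¹) ^ 2))) := by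
    filter_upwards [hevsmall] with n hn
    set ε := e n with hεdef
    have hε : 0 < ε := he_pos n
    have hε1 : ε ≤ 1 := he_le1 n
    set l : ℝ := 1 + ε with hldef
    have hl1 : 1 < l := by rw [hldef]; linarith
    have hl2 : l ≤ 2 := by rw [hldef]; linarith
    have hl0 : 0 < l := by linarith
    -- basic denominators
    have hQTnn : 0 ≤ Rb (T + ε) + ε * BB := by
      have := hRb_nn (T + ε) (by linarith)
      nlinarith
    have hQtT : Rb (t + ε) + ε * BB ≤ Rb (T + ε) + ε * BB := by
      have : Rb (t + ε) ≤ Rb (T + ε) := hRb_mono (by linarith)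
      linarith
    have hQtnn : 0 ≤ Rb (t + ε) + ε * BB := by
      have := hRb_nn (t + ε) (by linarith)
      nlinarith
    have hmT : 0 < 1 - l * (Rb (T + ε) + ε * BB) := by linarith
    have hmt : 0 < 1 - l * (Rb (t + ε) + ε * BB) := by nlinarith
    -- the mollified majorant A
    set A : ℝ → ℝ := fun s => ε⁻¹ * (H (s + ε) - H s) + ε with hAdef
    have hA_cont : Continuous A := by
      apply Continuous.add _ continuous_const
      exact continuous_const.mul ((hH_cont.comp (continuous_id.add continuous_const)).sub hH_cont)
    have havg : ∀ s : ℝ, H (s + ε) - H s = ∫ w in s..(s + ε), hcl w := by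
      intro s; have := hHadd s (s + ε); linarith
    have hA_lb : ∀ s, hcl s + ε ≤ A s := by
      intro s
      have h1 : ∫ w in s..(s + ε), (fun _ => hcl s) w ≤ ∫ w in s..(s + ε), hcl w :=
        integral_mono_on (by linarith) intervalIntegrable_const (hcl_int _ _)
          (fun w hw => hcl_mono hw.1)
      rw [intervalIntegral.integral_const] at h1
      have he1 : s + ε - s = ε := by ring
      rw [he1, smul_eq_mul] at h1
      have h2 : ε * hcl s ≤ H (s + ε) - H s := by rw [havg s]; exact h1
      have h3 : ε⁻¹ * (ε * hcl s) ≤ ε⁻¹ * (H (s + ε) - H s) :=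
        mul_le_mul_of_nonneg_left h2 (inv_nonneg.mpr hε.le)
      have h4 : ε⁻¹ * (ε * hcl s) = hcl s := by field_simp
      simp only [hAdef]
      linarith
    have hA_ub : ∀ s, A s ≤ hcl (s + ε) + ε := by
      intro s
      have h1 : ∫ w in s..(s + ε), hcl w ≤ ∫ w in s..(s + ε), (fun _ => hcl (s + ε)) w :=
        integral_mono_on (by linarith) (hcl_int _ _) intervalIntegrable_const
          (fun w hw => hcl_mono hw.2)
      rw [intervalIntegral.integral_const] at h1
      have he1 : s + ε - s = ε := by ring
      rw [he1, smul_eq_mul] at h1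
      have h2 : H (s + ε) - H s ≤ ε * hcl (s + ε) := by rw [havg s]; exact h1
      have h3 : ε⁻¹ * (H (s + ε) - H s) ≤ ε⁻¹ * (ε * hcl (s + ε)) :=
        mul_le_mul_of_nonneg_left h2 (inv_nonneg.mpr hε.le)
      have h4 : ε⁻¹ * (ε * hcl (s + ε)) = hcl (s + ε) := by field_simp
      simp only [hAdef]
      linarith
    have hA_pos : ∀ s, 0 < A s := by
      intro s
      have := hA_lb s
      have := hcl_nn s
      linarith
    have hA_mono : Monotone A := by
      intro u v huv
      have hmint : IntervalIntegrable (fun w => hcl (w - (v - u))) volume v (v + ε) :=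
        Monotone.intervalIntegrable (fun w₁ w₂ hw => hcl_mono (by linarith))
      have hshift : ∫ w in u..(u + ε), hcl w = ∫ w in v..(v + ε), hcl (w - (v - u)) := by
        have h5 := integral_comp_sub_right (a := v) (b := v + ε) (fun w => hcl w) (v - u)
        rw [show v - (v - u) = u by ring, show v + ε - (v - u) = u + ε by ring] at h5
        exact h5.symm
      have hcomp : ∫ w in v..(v + ε), hcl (w - (v - u)) ≤ ∫ w in v..(v + ε), hcl w :=
        integral_mono_on (by linarith) hmint (hcl_int _ _)
          (fun w hw => hcl_mono (by linarith))
      have h6 : H (u + ε) - H u ≤ H (v + ε) - H v := by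
        rw [havg u, havg v, hshift]; exact hcomp
      simp only [hAdef]
      have := mul_le_mul_of_nonneg_left h6 (inv_nonneg.mpr hε.le)
      linarith
    have hAb_cont : Continuous fun s => A s * b s := hA_cont.mul hb_cont
    have hAb_nn : ∀ s, 0 ≤ A s * b s := fun s => mul_nonneg (hA_pos s).le (hb_pos s).le
    -- comparison of ∫ A b with Rb
    have hQbound : ∀ τ, 0 ≤ τ → τ ≤ T →
        (∫ s in (0:ℝ)..τ, A s * b s) ≤ Rb (τ + ε) + ε * BB := by
      intro τ hτ0 hτT
      have hsh_int : IntervalIntegrable (fun s => hcl (s + ε) * b (s + ε)) volume 0 τ := by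
        apply IntervalIntegrable.mul_continuousOn
        · exact Monotone.intervalIntegrable (fun u v huv => hcl_mono (by linarith))
        · exact (hb_cont.comp (continuous_id.add continuous_const)).continuousOn
      have hpt : ∀ s ∈ Icc (0:ℝ) τ, A s * b s ≤ hcl (s + ε) * b (s + ε) + ε * b s := by
        intro s hs
        have h1 : A s - ε ≤ hcl (s + ε) := by have := hA_ub s; linarith
        have h2 : b s ≤ b (s + ε) := hb_mono (by linarith)
        have h4 : 0 ≤ b s := (hb_pos s).le
        have p1 : (A s - ε) * b s ≤ hcl (s + ε) * b s := mul_le_mul_of_nonneg_right h1 h4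
        have p2 : hcl (s + ε) * b s ≤ hcl (s + ε) * b (s + ε) :=
          mul_le_mul_of_nonneg_left h2 (hcl_nn _)
        nlinarith
      have hint : (∫ s in (0:ℝ)..τ, A s * b s)
          ≤ ∫ s in (0:ℝ)..τ, (hcl (s + ε) * b (s + ε) + ε * b s) :=
        integral_mono_on hτ0 (hAb_cont.intervalIntegrable 0 τ)
          (hsh_int.add ((continuous_const.mul hb_cont).intervalIntegrable 0 τ)) hpt
      have hsplit2 : ∫ s in (0:ℝ)..τ, (hcl (s + ε) * b (s + ε) + ε * b s)
          = (∫ s in (0:ℝ)..τ, hcl (s + ε) * b (s + ε)) + ∫ s in (0:ℝ)..τ, ε * b s :=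
        integral_add hsh_int ((continuous_const.mul hb_cont).intervalIntegrable 0 τ)
      have hshift : ∫ s in (0:ℝ)..τ, hcl (s + ε) * b (s + ε) = ∫ v in ε..(τ + ε), g0 v := by
        have h5 := integral_comp_add_right (a := 0) (b := τ) (fun v => g0 v) ε
        rw [zero_add] at h5
        rw [← h5]
      have h6 : ∫ v in ε..(τ + ε), g0 v ≤ Rb (τ + ε) := by
        have hadd : Rb ε + ∫ v in ε..(τ + ε), g0 v = Rb (τ + ε) :=
          integral_add_adjacent_intervals (hg0_int 0 ε) (hg0_int ε (τ + ε))
        have := hRb_nn ε hε.le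
        linarith
      have h10 : ∫ s in (0:ℝ)..τ, hcl (s + ε) * b (s + ε) ≤ Rb (τ + ε) := by
        rw [hshift]; exact h6
      have h7 : ∫ s in (0:ℝ)..τ, ε * b s = ε * ∫ s in (0:ℝ)..τ, b s := integral_const_mul _ _
      have h8 : ∫ s in (0:ℝ)..τ, b s ≤ BB := by
        have hadd : (∫ s in (0:ℝ)..τ, b s) + ∫ s in τ..T, b s = BB :=
          integral_add_adjacent_intervals (hb_cont.intervalIntegrable 0 τ)
            (hb_cont.intervalIntegrable τ T)
        have : 0 ≤ ∫ s in τ..T, b s := integral_nonneg hτT (fun u _ => (hb_pos u).le)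
        linarith
      have h9 : ε * ∫ s in (0:ℝ)..τ, b s ≤ ε * BB := mul_le_mul_of_nonneg_left h8 hε.le
      rw [hsplit2, h7] at hint
      linarith
    -- the rescaled solution
    set xb : ℝ → ℝ := fun s => Y (proj s) * Real.exp (-(C₅ * proj s)) with hxbdef
    have hxb_cont : Continuous xb := by
      have h1 : Continuous fun s => Y (proj s) := hYcont.comp_continuous hproj_cont hproj_mem
      have h2 : Continuous fun s => Real.exp (-(C₅ * proj s)) :=
        Real.continuous_exp.comp (continuous_const.mul hproj_cont).neg
      exact h1.mul h2
    have hxb_nn : ∀ s, 0 ≤ xb s :=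
      fun s => mul_nonneg (hYnonneg _ (hproj_mem s)) (Real.exp_pos _).le
    have hint_eq : ∀ τ ∈ Icc (0:ℝ) T, (∫ s in (0:ℝ)..τ, b s * xb s ^ 2)
        = C₃ * ∫ s in (0:ℝ)..τ, Y s ^ 2 := by
      rintro τ ⟨hτ0, hτT⟩
      rw [← intervalIntegral.integral_const_mul]
      apply integral_congr
      intro s hs
      rw [uIcc_of_le hτ0] at hs
      have hsT : s ∈ Icc (0:ℝ) T := ⟨hs.1, hs.2.trans hτT⟩
      have hps := hproj_id s hsT
      simp only [hbdef, hxbdef]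
      rw [hps]
      have hexp : Real.exp (2 * C₅ * s) * Real.exp (-(C₅ * s)) ^ 2 = 1 := by
        have harg : 2 * C₅ * s + (-(C₅ * s) + -(C₅ * s)) = 0 := by ring
        rw [sq, ← Real.exp_add, ← Real.exp_add, harg, Real.exp_zero]
      calc C₃ * Real.exp (2 * C₅ * s) * (Y s * Real.exp (-(C₅ * s))) ^ 2
          = C₃ * Y s ^ 2 * (Real.exp (2 * C₅ * s) * Real.exp (-(C₅ * s)) ^ 2) := by ring
        _ = C₃ * Y s ^ 2 := by rw [hexp, mul_one]
    have hxb_ineq : ∀ τ ∈ Icc (0:ℝ) T, xb τ ≤ A τ + ∫ s in (0:ℝ)..τ, b s * xb s ^ 2 := by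
      intro τ hτ
      have hpe := hproj_id τ hτ
      have hYb := hineq τ hτ
      have hIeq := hint_eq τ hτ
      have hxbτ : xb τ = Y τ * Real.exp (-(C₅ * τ)) := by
        simp only [hxbdef]; rw [hpe]
      have h6 : Y τ * Real.exp (-(C₅ * τ)) ≤ h τ + C₃ * ∫ s in (0:ℝ)..τ, Y s ^ 2 := by
        have h7 := mul_le_mul_of_nonneg_right hYb (Real.exp_pos (-(C₅ * τ))).le
        have h9 : Real.exp (C₅ * τ) * Real.exp (-(C₅ * τ)) = 1 := by
          rw [← Real.exp_add]; simp
        have h8 : (Real.exp (C₅ * τ) * h τ + C₃ * Real.exp (C₅ * τ) * ∫ s in (0:ℝ)..τ, Y s ^ 2)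
            * Real.exp (-(C₅ * τ)) = h τ + C₃ * ∫ s in (0:ℝ)..τ, Y s ^ 2 := by
          linear_combination (h τ + C₃ * ∫ s in (0:ℝ)..τ, Y s ^ 2) * h9
        rw [h8] at h7
        exact h7
      have hAτ : h τ ≤ A τ := by
        have h10 := hA_lb τ
        rw [hcl_eq τ hτ] at h10
        linarith
      rw [hxbτ, hIeq]
      linarith
    -- smallness and main Grönwall bound
    have hsmall' : l * ∫ s in (0:ℝ)..T, A s * b s < 1 := by
      have h1 := hQbound T hT0 le_rfl
      have h2 := mul_le_mul_of_nonneg_left h1 hl0.le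
      calc l * ∫ s in (0:ℝ)..T, A s * b s ≤ l * (Rb (T + ε) + ε * BB) := h2
        _ < 1 := hn
    have hmain := gron_aux T l hT hl1 hl2 A b xb hA_cont hb_cont hxb_cont hA_pos
      (fun s => (hb_pos s).le) hxb_nn (hA_mono.monotoneOn _) hxb_ineq hsmall'
    -- notation for the running integral
    set Ra : ℝ → ℝ := fun τ => ∫ s in (0:ℝ)..τ, A s * b s with hRadef
    have hRa_cont : Continuous Ra :=
      intervalIntegral.continuous_primitive (fun u v => hAb_cont.intervalIntegrable u v) 0
    have hRa_mono : ∀ u v : ℝ, u ≤ v → Ra u ≤ Ra v := by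
      intro u v huv
      have hadd : Ra u + ∫ w in u..v, A w * b w = Ra v :=
        integral_add_adjacent_intervals (hAb_cont.intervalIntegrable 0 u)
          (hAb_cont.intervalIntegrable u v)
      have : 0 ≤ ∫ w in u..v, A w * b w := integral_nonneg huv (fun w _ => hAb_nn w)
      linarith
    have hRat : Ra t ≤ Rb (t + ε) + ε * BB := hQbound t ht0 htT
    have hden_t : ∀ s ∈ Icc (0:ℝ) t, 0 < 1 - l * Ra s := by
      rintro s ⟨hs0, hst⟩
      have h1 : Ra s ≤ Ra t := hRa_mono s t hst
      nlinarith
    have hmden : ∀ s ∈ Icc (0:ℝ) t, 1 - l * (Rb (T + ε) + ε * BB) ≤ 1 - l * Ra s := by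
      rintro s ⟨hs0, hst⟩
      have h1 : Ra s ≤ Ra t := hRa_mono s t hst
      nlinarith
    have hxbb : ∀ s ∈ Icc (0:ℝ) t, xb s ≤ A s * (1 - l * Ra s)⁻¹ :=
      fun s hs => hmain s ⟨hs.1, hs.2.trans htT⟩
    have hkey : (∫ s in (0:ℝ)..t, (A s * b s) * ((1 - l * Ra s)⁻¹) ^ 2)
        = l⁻¹ * ((1 - l * Ra t)⁻¹ - 1) :=
      ftc_aux l t (fun s => A s * b s) ht0 hl0 hAb_cont hden_t
    -- the two integrands
    set G2 : ℝ → ℝ := fun s => (A s * b s) * ((1 - l * Ra s)⁻¹) ^ 2 with hG2def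
    set F : ℝ → ℝ := fun s => b s * (A s * (1 - l * Ra s)⁻¹) ^ 2 with hFdef
    have hG2nn : ∀ s, 0 ≤ G2 s := fun s => mul_nonneg (hAb_nn s) (sq_nonneg _)
    have hFnn : ∀ s, 0 ≤ F s := fun s => mul_nonneg (hb_pos s).le (sq_nonneg _)
    have hinv_contOn : ContinuousOn (fun s => (1 - l * Ra s)⁻¹) (Icc (0:ℝ) t) := by
      apply ContinuousOn.inv₀
      · exact (continuous_const.sub (continuous_const.mul hRa_cont)).continuousOn
      · intro s hs; exact (hden_t s hs).ne'
    have hG2_contOn : ContinuousOn G2 (Icc (0:ℝ) t) :=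
      hAb_cont.continuousOn.mul (hinv_contOn.pow 2)
    have hF_contOn : ContinuousOn F (Icc (0:ℝ) t) :=
      hb_cont.continuousOn.mul ((hA_cont.continuousOn.mul hinv_contOn).pow 2)
    -- split point
    set τ₀ : ℝ := max (t - ε) 0 with hτ₀def
    have hτ₀0 : 0 ≤ τ₀ := le_max_right _ _
    have hτ₀t : τ₀ ≤ t := max_le (by linarith) ht0
    have hFint1 : IntervalIntegrable F volume 0 τ₀ := by
      apply ContinuousOn.intervalIntegrable
      rw [uIcc_of_le hτ₀0]
      exact hF_contOn.mono (Icc_subset_Icc le_rfl hτ₀t)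
    have hFint2 : IntervalIntegrable F volume τ₀ t := by
      apply ContinuousOn.intervalIntegrable
      rw [uIcc_of_le hτ₀t]
      exact hF_contOn.mono (Icc_subset_Icc hτ₀0 le_rfl)
    have hG2int : IntervalIntegrable G2 volume 0 t := by
      apply ContinuousOn.intervalIntegrable
      rw [uIcc_of_le ht0]
      exact hG2_contOn
    have hG2int1 : IntervalIntegrable G2 volume 0 τ₀ := by
      apply ContinuousOn.intervalIntegrable
      rw [uIcc_of_le hτ₀0]
      exact hG2_contOn.mono (Icc_subset_Icc le_rfl hτ₀t)
    have hG2int2 : IntervalIntegrable G2 volume τ₀ t := by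
      apply ContinuousOn.intervalIntegrable
      rw [uIcc_of_le hτ₀t]
      exact hG2_contOn.mono (Icc_subset_Icc hτ₀0 le_rfl)
    have hIG2 : (∫ s in (0:ℝ)..τ₀, G2 s) ≤ ∫ s in (0:ℝ)..t, G2 s := by
      have hadd : (∫ s in (0:ℝ)..τ₀, G2 s) + ∫ s in τ₀..t, G2 s = ∫ s in (0:ℝ)..t, G2 s :=
        integral_add_adjacent_intervals hG2int1 hG2int2
      have : 0 ≤ ∫ s in τ₀..t, G2 s := integral_nonneg hτ₀t (fun w _ => hG2nn w)
      linarith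
    have hIG2nn : 0 ≤ ∫ s in (0:ℝ)..t, G2 s := integral_nonneg ht0 (fun w _ => hG2nn w)
    have hht : 0 ≤ h t := hhnonneg t ⟨ht0, htT⟩
    -- piece 1
    have hpiece1 : (∫ s in (0:ℝ)..τ₀, F s) ≤ (h t + ε) * ∫ s in (0:ℝ)..t, G2 s := by
      rcases le_or_gt t ε with hcase | hcase
      · have hτ₀eq : τ₀ = 0 := by rw [hτ₀def]; exact max_eq_right (by linarith)
        rw [hτ₀eq, integral_same]
        exact mul_nonneg (by linarith) hIG2nn
      · have hτ₀eq : τ₀ = t - ε := by rw [hτ₀def]; exact max_eq_left (by linarith)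
        have hptF : ∀ s ∈ Icc (0:ℝ) τ₀, F s ≤ (h t + ε) * G2 s := by
          rintro s ⟨hs0, hsτ₀⟩
          have hsε : s + ε ≤ t := by rw [hτ₀eq] at hsτ₀; linarith
          have hsεT : s + ε ∈ Icc (0:ℝ) T := ⟨by linarith, by linarith⟩
          have hAle : A s ≤ h t + ε := by
            have h1 := hA_ub s
            rw [hcl_eq _ hsεT] at h1
            have h2 : h (s + ε) ≤ h t :=
              hhmono _ hsεT t ⟨ht0, htT⟩ hsε
            linarith
          have hFG : F s = A s * G2 s := by simp only [hFdef, hG2def]; ring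
          rw [hFG]
          exact mul_le_mul_of_nonneg_right hAle (hG2nn s)
        have hmul_int : IntervalIntegrable (fun s => (h t + ε) * G2 s) volume 0 τ₀ :=
          hG2int1.const_mul _
        have h1 : (∫ s in (0:ℝ)..τ₀, F s) ≤ ∫ s in (0:ℝ)..τ₀, (h t + ε) * G2 s :=
          integral_mono_on hτ₀0 hFint1 hmul_int hptF
        have h2 : (∫ s in (0:ℝ)..τ₀, (h t + ε) * G2 s) = (h t + ε) * ∫ s in (0:ℝ)..τ₀, G2 s :=
          integral_const_mul _ _
        have h3 : (h t + ε) * (∫ s in (0:ℝ)..τ₀, G2 s) ≤ (h t + ε) * ∫ s in (0:ℝ)..t, G2 s :=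
          mul_le_mul_of_nonneg_left hIG2 (by linarith)
        linarith [h1, h2.le, h2.ge]
    -- piece 2
    have hpiece2 : (∫ s in τ₀..t, F s)
        ≤ ε * (C₃ * Real.exp (2 * C₅ * T) * (h T + ε) ^ 2
            * ((1 - l * (Rb (T + ε) + ε * BB))⁻¹) ^ 2) := by
      set K : ℝ := C₃ * Real.exp (2 * C₅ * T) * (h T + ε) ^ 2
          * ((1 - l * (Rb (T + ε) + ε * BB))⁻¹) ^ 2 with hKdef
      have hhT : 0 ≤ h T := hhnonneg T ⟨hT0, le_rfl⟩
      have hKnn : 0 ≤ K := by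
        apply mul_nonneg
        apply mul_nonneg
        · exact mul_nonneg hC₃.le (Real.exp_pos _).le
        · positivity
        · exact sq_nonneg _
      have hptK : ∀ s ∈ Icc τ₀ t, F s ≤ K := by
        rintro s ⟨hsτ₀, hst⟩
        have hs0 : 0 ≤ s := le_trans hτ₀0 hsτ₀
        have hsIcc : s ∈ Icc (0:ℝ) t := ⟨hs0, hst⟩
        have hbs : b s ≤ C₃ * Real.exp (2 * C₅ * T) := by
          simp only [hbdef]
          apply mul_le_mul_of_nonneg_left _ hC₃.le
          apply Real.exp_le_exp.mpr
          nlinarith [hst.trans htT]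
        have hAs : A s ≤ h T + ε := by
          have h1 := hA_ub s
          have h2 := hcl_le (s + ε)
          linarith
        have hdpos := hden_t s hsIcc
        have hinvle : (1 - l * Ra s)⁻¹ ≤ (1 - l * (Rb (T + ε) + ε * BB))⁻¹ := by
          apply inv_anti₀ hmT
          exact hmden s hsIcc
        have hinvnn : 0 ≤ (1 - l * Ra s)⁻¹ := (inv_pos.mpr hdpos).le
        have hF1 : F s = b s * A s ^ 2 * ((1 - l * Ra s)⁻¹) ^ 2 := by
          simp only [hFdef]; ring
        rw [hF1, hKdef]
        have step1 : b s * A s ^ 2 * ((1 - l * Ra s)⁻¹) ^ 2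
            ≤ (C₃ * Real.exp (2 * C₅ * T)) * A s ^ 2 * ((1 - l * Ra s)⁻¹) ^ 2 := by
          apply mul_le_mul_of_nonneg_right _ (sq_nonneg _)
          exact mul_le_mul_of_nonneg_right hbs (sq_nonneg _)
        have step2 : (C₃ * Real.exp (2 * C₅ * T)) * A s ^ 2 * ((1 - l * Ra s)⁻¹) ^ 2
            ≤ (C₃ * Real.exp (2 * C₅ * T)) * (h T + ε) ^ 2 * ((1 - l * Ra s)⁻¹) ^ 2 := by
          apply mul_le_mul_of_nonneg_right _ (sq_nonneg _)
          apply mul_le_mul_of_nonneg_left _ (mul_nonneg hC₃.le (Real.exp_pos _).le)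
          exact pow_le_pow_left₀ (hA_pos s).le hAs 2
        have step3 : (C₃ * Real.exp (2 * C₅ * T)) * (h T + ε) ^ 2 * ((1 - l * Ra s)⁻¹) ^ 2
            ≤ (C₃ * Real.exp (2 * C₅ * T)) * (h T + ε) ^ 2
              * ((1 - l * (Rb (T + ε) + ε * BB))⁻¹) ^ 2 := by
          apply mul_le_mul_of_nonneg_left _ (by positivity)
          exact pow_le_pow_left₀ hinvnn hinvle 2
        linarith
      have h1 : (∫ s in τ₀..t, F s) ≤ ∫ s in τ₀..t, (fun _ => K) s :=
        integral_mono_on hτ₀t hFint2 intervalIntegrable_const hptK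
      rw [intervalIntegral.integral_const, smul_eq_mul] at h1
      have h2 : t - τ₀ ≤ ε := by rw [hτ₀def]; have := le_max_left (t - ε) (0:ℝ); linarith
      have h3 : (t - τ₀) * K ≤ ε * K := mul_le_mul_of_nonneg_right h2 hKnn
      linarith
    -- combine
    have hstep0 : (∫ s in (0:ℝ)..t, b s * xb s ^ 2) ≤ ∫ s in (0:ℝ)..t, F s := by
      apply integral_mono_on ht0 ((hb_cont.mul (hxb_cont.pow 2)).intervalIntegrable 0 t)
        (by apply ContinuousOn.intervalIntegrable; rwa [uIcc_of_le ht0])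
      intro s hs
      have h1 : xb s ^ 2 ≤ (A s * (1 - l * Ra s)⁻¹) ^ 2 :=
        pow_le_pow_left₀ (hxb_nn s) (hxbb s hs) 2
      exact mul_le_mul_of_nonneg_left h1 (hb_pos s).le
    have hsplitF : (∫ s in (0:ℝ)..t, F s)
        = (∫ s in (0:ℝ)..τ₀, F s) + ∫ s in τ₀..t, F s :=
      (integral_add_adjacent_intervals hFint1 hFint2).symm
    have hmono_inv : l⁻¹ * ((1 - l * Ra t)⁻¹ - 1)
        ≤ l⁻¹ * ((1 - l * (Rb (t + ε) + ε * BB))⁻¹ - 1) := by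
      apply mul_le_mul_of_nonneg_left _ (inv_nonneg.mpr hl0.le)
      have h1 : (1 - l * Ra t)⁻¹ ≤ (1 - l * (Rb (t + ε) + ε * BB))⁻¹ := by
        apply inv_anti₀ hmt
        nlinarith
      linarith
    have hIle : C₃ * ∫ s in (0:ℝ)..t, Y s ^ 2
        ≤ (h t + ε) * l⁻¹ * ((1 - l * (Rb (t + ε) + ε * BB))⁻¹ - 1)
          + ε * (C₃ * Real.exp (2 * C₅ * T) * (h T + ε) ^ 2
              * ((1 - l * (Rb (T + ε) + ε * BB))⁻¹) ^ 2) := by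
      rw [← hint_eq t ⟨ht0, htT⟩]
      have hG2eq : (∫ s in (0:ℝ)..t, G2 s) = l⁻¹ * ((1 - l * Ra t)⁻¹ - 1) := hkey
      have c1 : (∫ s in (0:ℝ)..t, b s * xb s ^ 2)
          ≤ (h t + ε) * (l⁻¹ * ((1 - l * Ra t)⁻¹ - 1))
            + ε * (C₃ * Real.exp (2 * C₅ * T) * (h T + ε) ^ 2
                * ((1 - l * (Rb (T + ε) + ε * BB))⁻¹) ^ 2) := by
        have := add_le_add hpiece1 hpiece2
        rw [hG2eq] at this
        linarith [hstep0, hsplitF.le, hsplitF.ge]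
      have c2 : (h t + ε) * (l⁻¹ * ((1 - l * Ra t)⁻¹ - 1))
          ≤ (h t + ε) * (l⁻¹ * ((1 - l * (Rb (t + ε) + ε * BB))⁻¹ - 1)) :=
        mul_le_mul_of_nonneg_left hmono_inv (by linarith)
      calc (∫ s in (0:ℝ)..t, b s * xb s ^ 2) ≤ _ := c1
        _ ≤ (h t + ε) * (l⁻¹ * ((1 - l * (Rb (t + ε) + ε * BB))⁻¹ - 1))
            + ε * (C₃ * Real.exp (2 * C₅ * T) * (h T + ε) ^ 2
                * ((1 - l * (Rb (T + ε) + ε * BB))⁻¹) ^ 2) := by linarith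
        _ = (h t + ε) * l⁻¹ * ((1 - l * (Rb (t + ε) + ε * BB))⁻¹ - 1)
            + ε * (C₃ * Real.exp (2 * C₅ * T) * (h T + ε) ^ 2
                * ((1 - l * (Rb (T + ε) + ε * BB))⁻¹) ^ 2) := by ring
    have hYb := hineq t ⟨ht0, htT⟩
    calc Y t ≤ Real.exp (C₅ * t) * h t
          + C₃ * Real.exp (C₅ * t) * ∫ s in (0:ℝ)..t, Y s ^ 2 := hYb
      _ = Real.exp (C₅ * t) * (h t + C₃ * ∫ s in (0:ℝ)..t, Y s ^ 2) := by ring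
      _ ≤ _ := by
          apply mul_le_mul_of_nonneg_left _ (Real.exp_pos (C₅ * t)).le
          linarith

  -- pass to the limit
  have hTend : Filter.Tendsto (fun n => Real.exp (C₅ * t) * (h t +
      ((h t + e n) * (1 + e n)⁻¹ * ((1 - (1 + e n) * (Rb (t + e n) + e n * BB))⁻¹ - 1)
        + e n * (C₃ * Real.exp (2 * C₅ * T) * (h T + e n) ^ 2
            * ((1 - (1 + e n) * (Rb (T + e n) + e n * BB))⁻¹) ^ 2))))
      Filter.atTop (nhds (Real.exp (C₅ * t) * (h t +
        ((h t + 0) * (1 : ℝ)⁻¹ * ((1 - Rb t)⁻¹ - 1)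
          + 0 * (C₃ * Real.exp (2 * C₅ * T) * (h T + 0) ^ 2 * ((1 - Rb T)⁻¹) ^ 2))))) := by
    have hinv_t : Filter.Tendsto (fun n => (1 - (1 + e n) * (Rb (t + e n) + e n * BB))⁻¹)
        Filter.atTop (nhds (1 - Rb t)⁻¹) :=
      (tendsto_const_nhds.sub (hQ_tend t)).inv₀ hRbt1.ne'
    have hinv_T : Filter.Tendsto (fun n => (1 - (1 + e n) * (Rb (T + e n) + e n * BB))⁻¹)
        Filter.atTop (nhds (1 - Rb T)⁻¹) :=
      (tendsto_const_nhds.sub (hQ_tend T)).inv₀ (by linarith : (0:ℝ) < 1 - Rb T).ne'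
    apply Filter.Tendsto.const_mul
    apply Filter.Tendsto.const_add
    apply Filter.Tendsto.add
    · exact ((tendsto_const_nhds.add he_tend).mul
        (hlam_tend.inv₀ one_ne_zero)).mul (hinv_t.sub tendsto_const_nhds)
    · exact he_tend.mul ((((tendsto_const_nhds (x := C₃ * Real.exp (2 * C₅ * T))).mul
        ((tendsto_const_nhds.add he_tend).pow 2))).mul (hinv_T.pow 2))
  have := ge_of_tendsto hTend hbound
  refine this.trans (le_of_eq ?_)
  rw [hRb_eq t ⟨ht0, htT⟩] at hRbt1 ⊢
  ring
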